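/- Unique Minimum Matching Lemma: let v : 2^{[n]} → ℝ be gross substitutes, S ⊆ [n], A = {a_1,...,a_k} ⊆ S, B = {b_1,...,b_k} ⊆ [n]\S. Form the weighted bipartite graph on A × B with weights w(a_i, b_j) = v(S) - v(S ∪ {b_j} \ {a_i}). If M = {(a_1,b_1),...,(a_k,b_k)} is the unique minimum-weight perfect matching of this graph, then v(S) - v(S ∪ B \ A) = ∑_{j=1}^k (v(S) - v(S ∪ {b_j} \ {a_j})). -/

import Mathlib

open Finset List

namespace UMM
variable {n : ℕ}

/-- A bound on `|v|`. -/
noncomputable def Vb (v : Finset (Fin n) → ℝ) : ℝ :=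
  ((univ : Finset (Fin n)).powerset.image fun T => |v T|).max'
    ⟨|v ∅|, mem_image.2 ⟨∅, Finset.empty_mem_powerset _, rfl⟩⟩

lemma le_Vb (v : Finset (Fin n) → ℝ) (T : Finset (Fin n)) : |v T| ≤ Vb v := by
  exact Finset.le_max' (((univ : Finset (Fin n)).powerset.image fun T => |v T|)) (|v T|)
    (mem_image.2 ⟨T, Finset.mem_powerset.2 (Finset.subset_univ T), rfl⟩)

lemma v_sub_le (v : Finset (Fin n) → ℝ) (T T' : Finset (Fin n)) :
    v T - v T' ≤ 2 * Vb v := by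
  have h1 := abs_le.1 (le_Vb v T)
  have h2 := abs_le.1 (le_Vb v T')
  linarith

lemma exists_demand (v : Finset (Fin n) → ℝ) (p : Fin n → ℝ) :
    ∃ R : Finset (Fin n), ∀ T, v T - ∑ j ∈ T, p j ≤ v R - ∑ j ∈ R, p j := by
  obtain ⟨R, -, hR⟩ := ((univ : Finset (Fin n)).powerset).exists_max_image
    (fun T => v T - ∑ j ∈ T, p j) ⟨∅, by simp⟩
  exact ⟨R, fun T => hR T (by simp)⟩

lemma pin_out (v : Finset (Fin n) → ℝ) {p : Fin n → ℝ} {R : Finset (Fin n)} {e : Fin n}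
    (hR : ∀ T, v T - ∑ j ∈ T, p j ≤ v R - ∑ j ∈ R, p j)
    (he : 2 * Vb v + 1 ≤ p e) : e ∉ R := by
  intro heR
  have h := hR (R.erase e)
  rw [Finset.sum_erase_eq_sub heR] at h
  have := v_sub_le v R (R.erase e)
  linarith

lemma pin_in (v : Finset (Fin n) → ℝ) {p : Fin n → ℝ} {R : Finset (Fin n)} {e : Fin n}
    (hR : ∀ T, v T - ∑ j ∈ T, p j ≤ v R - ∑ j ∈ R, p j)
    (he : p e ≤ -(2 * Vb v + 1)) : e ∈ R := by
  by_contra heR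
  have h := hR (insert e R)
  rw [Finset.sum_insert heR] at h
  have := v_sub_le v R (insert e R)
  linarith

def GS (v : Finset (Fin n) → ℝ) : Prop :=
  ∀ (p p' : Fin n → ℝ), (∀ j, p j ≤ p' j) →
    ∀ S : Finset (Fin n),
      (∀ T, v T - ∑ j ∈ T, p j ≤ v S - ∑ j ∈ S, p j) →
      ∃ S', (∀ T, v T - ∑ j ∈ T, p' j ≤ v S' - ∑ j ∈ S', p' j) ∧
        ∀ j ∈ S, p j = p' j → j ∈ S'

lemma sandwich_pair {C R : Finset (Fin n)} {e f : Fin n}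
    (h1 : C ⊆ R) (h2 : R ⊆ insert e (insert f C)) (he' : e ∉ C) (hf' : f ∉ C) :
    R = C ∨ R = insert e C ∨ R = insert f C ∨ R = insert e (insert f C) := by
  by_cases he : e ∈ R <;> by_cases hf : f ∈ R
  · refine Or.inr (Or.inr (Or.inr ?_))
    refine Finset.Subset.antisymm h2 ?_
    intro j hj
    simp only [Finset.mem_insert] at hj
    rcases hj with rfl | rfl | hj
    exacts [he, hf, h1 hj]
  · refine Or.inr (Or.inl ?_)
    refine Finset.Subset.antisymm ?_ (insert_subset he h1)
    intro j hj
    have := h2 hj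
    simp only [Finset.mem_insert] at this ⊢
    rcases this with rfl | rfl | h
    exacts [Or.inl rfl, absurd hj hf, Or.inr h]
  · refine Or.inr (Or.inr (Or.inl ?_))
    refine Finset.Subset.antisymm ?_ (insert_subset hf h1)
    intro j hj
    have := h2 hj
    simp only [Finset.mem_insert] at this ⊢
    rcases this with rfl | rfl | h
    exacts [absurd hj he, Or.inl rfl, Or.inr h]
  · refine Or.inl ?_
    refine Finset.Subset.antisymm ?_ h1
    intro j hj
    have := h2 hj
    simp only [Finset.mem_insert] at this
    rcases this with rfl | rfl | h
    exacts [absurd hj he, absurd hj hf, h]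
lemma submod_local {v : Finset (Fin n) → ℝ} (hGS : GS v) (C : Finset (Fin n)) {e f : Fin n}
    (he : e ∉ C) (hf : f ∉ C) (hef : e ≠ f) :
    v (insert e (insert f C)) + v C ≤ v (insert e C) + v (insert f C) := by
  classical
  by_contra hcon
  push_neg at hcon
  obtain ⟨δ, hδ⟩ : ∃ x : ℝ,
      (v (insert e (insert f C)) + v C - v (insert e C) - v (insert f C)) / 3 = x := ⟨_, rfl⟩
  have hδpos : 0 < δ := by rw [← hδ]; linarith
  obtain ⟨L, hL⟩ : ∃ x : ℝ, 2 * Vb v + 1 = x := ⟨_, rfl⟩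
  set p : Fin n → ℝ :=
    fun j => if j ∈ C then -L else if j = e then (v (insert e C) - v C) + δ
      else if j = f then (v (insert f C) - v C) + δ else L with hp
  have hpe : p e = (v (insert e C) - v C) + δ := by simp [hp, he]
  have hpf : p f = (v (insert f C) - v C) + δ := by simp [hp, hf, Ne.symm hef]
  have hpC : ∀ j ∈ C, p j = -L := fun j hj => by simp [hp, hj]
  have hpout : ∀ j, j ∉ C → j ≠ e → j ≠ f → p j = L := fun j h1 h2 h3 => by
    simp [hp, h1, h2, h3]
  have hefC : e ∉ insert f C := by simp [hef, he]
  have hsum_e : ∑ j ∈ insert e C, p j = p e + ∑ j ∈ C, p j := Finset.sum_insert he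
  have hsum_f : ∑ j ∈ insert f C, p j = p f + ∑ j ∈ C, p j := Finset.sum_insert hf
  have hsum_ef : ∑ j ∈ insert e (insert f C), p j = p e + (p f + ∑ j ∈ C, p j) := by
    rw [Finset.sum_insert hefC, Finset.sum_insert hf]
  obtain ⟨R, hR⟩ := exists_demand v p
  have hCR : C ⊆ R := fun j hj => pin_in v hR (by rw [hpC j hj, hL])
  have hRC : R ⊆ insert e (insert f C) := by
    intro j hj
    by_contra hj'
    simp only [Finset.mem_insert, not_or] at hj'
    exact (pin_out v hR (by rw [hpout j hj'.2.2 hj'.1 hj'.2.1, hL])) hj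
  have hUR : v R - ∑ j ∈ R, p j ≤
      v (insert e (insert f C)) - ∑ j ∈ insert e (insert f C), p j := by
    rcases sandwich_pair hCR hRC he hf with rfl | rfl | rfl | rfl
    · rw [hsum_ef, hpe, hpf]; linarith
    · rw [hsum_ef, hsum_e, hpe, hpf]; linarith
    · rw [hsum_ef, hsum_f, hpe, hpf]; linarith
    · exact le_refl _
  have hdem : ∀ T, v T - ∑ j ∈ T, p j ≤
      v (insert e (insert f C)) - ∑ j ∈ insert e (insert f C), p j :=
    fun T => le_trans (hR T) hUR
  set p' : Fin n → ℝ := fun j =>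
    if j = e then (v (insert e (insert f C)) - v (insert f C)) + δ else p j with hp'
  have hp'e : p' e = (v (insert e (insert f C)) - v (insert f C)) + δ := by simp [hp']
  have hp'ne : ∀ j, j ≠ e → p' j = p j := fun j hj => by simp [hp', hj]
  have hle : ∀ j, p j ≤ p' j := by
    intro j
    by_cases hje : j = e
    · subst hje; rw [hp'e, hpe]; linarith
    · rw [hp'ne j hje]
  obtain ⟨S', hS', hkeep⟩ := hGS p p' hle _ hdem
  have hfS' : f ∈ S' := hkeep f (by simp) (by rw [hp'ne f (Ne.symm hef)])
  have hCS' : C ⊆ S' := fun j hj =>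
    pin_in v hS' (by rw [hp'ne j (fun h => he (h ▸ hj)), hpC j hj, hL])
  have hS'C : S' ⊆ insert e (insert f C) := by
    intro j hj
    by_contra hj'
    simp only [Finset.mem_insert, not_or] at hj'
    exact (pin_out v hS'
      (by rw [hp'ne j hj'.1, hpout j hj'.2.2 hj'.1 hj'.2.1, hL])) hj
  have hsum'_C : ∑ j ∈ C, p' j = ∑ j ∈ C, p j :=
    Finset.sum_congr rfl (fun j hj => hp'ne j (fun h => he (h ▸ hj)))
  have hsum'_f : ∑ j ∈ insert f C, p' j = p f + ∑ j ∈ C, p j := by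
    rw [Finset.sum_insert hf, hsum'_C, hp'ne f (Ne.symm hef)]
  have hsum'_ef : ∑ j ∈ insert e (insert f C), p' j
      = ((v (insert e (insert f C)) - v (insert f C)) + δ) + (p f + ∑ j ∈ C, p j) := by
    rw [Finset.sum_insert hefC, Finset.sum_insert hf, hsum'_C, hp'e, hp'ne f (Ne.symm hef)]
  rcases sandwich_pair hCS' hS'C he hf with rfl | rfl | rfl | rfl
  · exact hf hfS'
  · simp only [Finset.mem_insert] at hfS'
    rcases hfS' with h | h
    exacts [hef h.symm, hf h]
  · have h1 := hS' C
    rw [hsum'_f, hsum'_C, hpf] at h1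
    linarith
  · have h1 := hS' C
    rw [hsum'_ef, hsum'_C, hpf] at h1
    linarith

lemma subset_triple {x y z : Fin n} {G : Finset (Fin n)} (h : G ⊆ {x, y, z}) :
    G = ∅ ∨ G = {x} ∨ G = {y} ∨ G = {z} ∨ G = {x, y} ∨ G = {x, z} ∨ G = {y, z} ∨
      G = {x, y, z} := by
  by_cases hx : x ∈ G <;> by_cases hy : y ∈ G <;> by_cases hz : z ∈ G
  · refine Or.inr (Or.inr (Or.inr (Or.inr (Or.inr (Or.inr (Or.inr ?_))))))
    refine Finset.Subset.antisymm h ?_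
    intro j hj
    simp only [Finset.mem_insert, Finset.mem_singleton] at hj
    rcases hj with rfl | rfl | rfl <;> assumption
  · refine Or.inr (Or.inr (Or.inr (Or.inr (Or.inl ?_))))
    refine Finset.Subset.antisymm ?_ ?_
    · intro j hj
      have := h hj
      simp only [Finset.mem_insert, Finset.mem_singleton] at this ⊢
      rcases this with rfl | rfl | rfl
      exacts [Or.inl rfl, Or.inr rfl, absurd hj hz]
    · intro j hj
      simp only [Finset.mem_insert, Finset.mem_singleton] at hj
      rcases hj with rfl | rfl <;> assumption
  · refine Or.inr (Or.inr (Or.inr (Or.inr (Or.inr (Or.inl ?_)))))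
    refine Finset.Subset.antisymm ?_ ?_
    · intro j hj
      have := h hj
      simp only [Finset.mem_insert, Finset.mem_singleton] at this ⊢
      rcases this with rfl | rfl | rfl
      exacts [Or.inl rfl, absurd hj hy, Or.inr rfl]
    · intro j hj
      simp only [Finset.mem_insert, Finset.mem_singleton] at hj
      rcases hj with rfl | rfl <;> assumption
  · refine Or.inr (Or.inl ?_)
    refine Finset.Subset.antisymm ?_ ?_
    · intro j hj
      have := h hj
      simp only [Finset.mem_insert, Finset.mem_singleton] at this ⊢
      rcases this with rfl | rfl | rfl
      exacts [rfl, absurd hj hy, absurd hj hz]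
    · intro j hj
      simp only [Finset.mem_singleton] at hj
      subst hj; assumption
  · refine Or.inr (Or.inr (Or.inr (Or.inr (Or.inr (Or.inr (Or.inl ?_))))))
    refine Finset.Subset.antisymm ?_ ?_
    · intro j hj
      have := h hj
      simp only [Finset.mem_insert, Finset.mem_singleton] at this ⊢
      rcases this with rfl | rfl | rfl
      exacts [absurd hj hx, Or.inl rfl, Or.inr rfl]
    · intro j hj
      simp only [Finset.mem_insert, Finset.mem_singleton] at hj
      rcases hj with rfl | rfl <;> assumption
  · refine Or.inr (Or.inr (Or.inl ?_))
    refine Finset.Subset.antisymm ?_ ?_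
    · intro j hj
      have := h hj
      simp only [Finset.mem_insert, Finset.mem_singleton] at this ⊢
      rcases this with rfl | rfl | rfl
      exacts [absurd hj hx, rfl, absurd hj hz]
    · intro j hj
      simp only [Finset.mem_singleton] at hj
      subst hj; assumption
  · refine Or.inr (Or.inr (Or.inr (Or.inl ?_)))
    refine Finset.Subset.antisymm ?_ ?_
    · intro j hj
      have := h hj
      simp only [Finset.mem_insert, Finset.mem_singleton] at this ⊢
      rcases this with rfl | rfl | rfl
      exacts [absurd hj hx, absurd hj hy, rfl]
    · intro j hj
      simp only [Finset.mem_singleton] at hj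
      subst hj; assumption
  · refine Or.inl ?_
    refine Finset.Subset.antisymm ?_ (Finset.empty_subset _)
    intro j hj
    have := h hj
    simp only [Finset.mem_insert, Finset.mem_singleton] at this
    rcases this with rfl | rfl | rfl
    exacts [absurd hj hx, absurd hj hy, absurd hj hz]

lemma sandwich_triple {C R : Finset (Fin n)} {x y z : Fin n}
    (h1 : C ⊆ R) (h2 : R ⊆ insert x (insert y (insert z C)))
    (hx : x ∉ C) (hy : y ∉ C) (hz : z ∉ C) :
    R = C ∨ R = insert x C ∨ R = insert y C ∨ R = insert z C ∨
      R = insert x (insert y C) ∨ R = insert x (insert z C) ∨ R = insert y (insert z C) ∨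
      R = insert x (insert y (insert z C)) := by
  have hRC : R = C ∪ (R \ C) := by
    rw [Finset.union_sdiff_of_subset h1]
  have hG : R \ C ⊆ {x, y, z} := by
    intro j hj
    rw [mem_sdiff] at hj
    have := h2 hj.1
    simp only [Finset.mem_insert, Finset.mem_singleton] at this ⊢
    rcases this with rfl | rfl | rfl | h
    exacts [Or.inl rfl, Or.inr (Or.inl rfl), Or.inr (Or.inr rfl), absurd h hj.2]
  rcases subset_triple hG with h | h | h | h | h | h | h | h <;> rw [h] at hRC
  · exact Or.inl (by rw [hRC, Finset.union_empty])
  · exact Or.inr (Or.inl (by rw [hRC, Finset.union_comm, ← Finset.insert_eq]))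
  · exact Or.inr (Or.inr (Or.inl (by rw [hRC, Finset.union_comm, ← Finset.insert_eq])))
  · exact Or.inr (Or.inr (Or.inr (Or.inl (by rw [hRC, Finset.union_comm, ← Finset.insert_eq]))))
  · refine Or.inr (Or.inr (Or.inr (Or.inr (Or.inl ?_))))
    rw [hRC, Finset.union_comm, Finset.insert_union, ← Finset.insert_eq]
  · refine Or.inr (Or.inr (Or.inr (Or.inr (Or.inr (Or.inl ?_)))))
    rw [hRC, Finset.union_comm, Finset.insert_union, ← Finset.insert_eq]
  · refine Or.inr (Or.inr (Or.inr (Or.inr (Or.inr (Or.inr (Or.inl ?_))))))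
    rw [hRC, Finset.union_comm, Finset.insert_union, ← Finset.insert_eq]
  · refine Or.inr (Or.inr (Or.inr (Or.inr (Or.inr (Or.inr (Or.inr ?_))))))
    rw [hRC, Finset.union_comm, Finset.insert_union, Finset.insert_union, ← Finset.insert_eq]
lemma triangle {v : Finset (Fin n) → ℝ} (hGS : GS v) (C : Finset (Fin n)) {x y z : Fin n}
    (hx : x ∉ C) (hy : y ∉ C) (hz : z ∉ C) (hxy : x ≠ y) (hxz : x ≠ z) (hyz : y ≠ z) :
    v (insert x (insert y C)) + v (insert z C) ≤
      max (v (insert x (insert z C)) + v (insert y C))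
          (v (insert y (insert z C)) + v (insert x C)) := by
  classical
  by_contra hcon
  rw [not_le, max_lt_iff] at hcon
  obtain ⟨hc1, hc2⟩ := hcon
  -- submodularity facts
  have sub1 := submod_local hGS C hx hy hxy
  have sub2 : v (insert x (insert y (insert z C))) + v (insert y C) ≤
      v (insert x (insert y C)) + v (insert y (insert z C)) := by
    have h := submod_local hGS (insert y C) (e := x) (f := z)
      (by simp [hxy, hx]) (by simp [Ne.symm hyz, hz]) hxz
    rwa [Finset.insert_comm z y C] at h
  -- normalized quantities
  obtain ⟨Nxy, hNxy⟩ : ∃ t : ℝ,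
      v (insert x (insert y C)) - v (insert x C) - v (insert y C) + v C = t := ⟨_, rfl⟩
  obtain ⟨Nxz, hNxz⟩ : ∃ t : ℝ,
      v (insert x (insert z C)) - v (insert x C) - v (insert z C) + v C = t := ⟨_, rfl⟩
  obtain ⟨Nyz, hNyz⟩ : ∃ t : ℝ,
      v (insert y (insert z C)) - v (insert y C) - v (insert z C) + v C = t := ⟨_, rfl⟩
  obtain ⟨NF, hNF⟩ : ∃ t : ℝ,
      v (insert x (insert y (insert z C))) - v (insert x C) - v (insert y C) - v (insert z C)
        + 2 * v C = t := ⟨_, rfl⟩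
  have hNxy0 : Nxy ≤ 0 := by linarith
  have hNxz_lt : Nxz < Nxy := by linarith
  have hNyz_lt : Nyz < Nxy := by linarith
  have hNFle : NF ≤ Nxy + Nyz := by linarith
  -- price levels
  obtain ⟨m3, hm3def⟩ : ∃ t : ℝ,
      max (NF - Nxy) (max (2 * Nxz - Nxy) (2 * Nyz - Nxy)) = t := ⟨_, rfl⟩
  have hm1 : NF - Nxy ≤ m3 := hm3def ▸ le_max_left _ _
  have hm2 : 2 * Nxz - Nxy ≤ m3 := hm3def ▸ le_trans (le_max_left _ _) (le_max_right _ _)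
  have hm3 : 2 * Nyz - Nxy ≤ m3 := hm3def ▸ le_trans (le_max_right _ _) (le_max_right _ _)
  have hmlt : m3 < Nxy := by
    rw [← hm3def]
    exact max_lt (by linarith) (max_lt (by linarith) (by linarith))
  obtain ⟨c, hc⟩ : ∃ t : ℝ, (m3 + Nxy) / 2 = t := ⟨_, rfl⟩
  obtain ⟨astar, hastar⟩ : ∃ t : ℝ, (Nxy + c) / 2 = t := ⟨_, rfl⟩
  have hcNxy : c < Nxy := by linarith
  have hcm3 : m3 < c := by linarith
  have hca : c < astar := by linarith
  have haN : astar < Nxy := by linarith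
  have hc0 : c < 0 := by linarith
  have hcNxz : Nxz ≤ c := by linarith
  have hcNyz : Nyz ≤ c := by linarith
  obtain ⟨ε, hε⟩ : ∃ t : ℝ,
      min (astar - c) (min (astar - Nxz) (astar - Nyz)) / 2 = t := ⟨_, rfl⟩
  have hε1 : ε ≤ (astar - c) / 2 := by
    have := min_le_left (astar - c) (min (astar - Nxz) (astar - Nyz)); linarith
  have hε2 : ε ≤ (astar - Nxz) / 2 := by
    have := le_trans (min_le_right (astar - c) _) (min_le_left (astar - Nxz) (astar - Nyz))
    linarith
  have hε3 : ε ≤ (astar - Nyz) / 2 := by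
    have := le_trans (min_le_right (astar - c) _) (min_le_right (astar - Nxz) (astar - Nyz))
    linarith
  have hεpos : 0 < ε := by
    have : 0 < min (astar - c) (min (astar - Nxz) (astar - Nyz)) :=
      lt_min (by linarith) (lt_min (by linarith) (by linarith))
    linarith
  have hVb0 : (0:ℝ) ≤ Vb v := le_trans (abs_nonneg _) (le_Vb v ∅)
  obtain ⟨L, hL⟩ : ∃ t : ℝ, 2 * Vb v + 1 = t := ⟨_, rfl⟩
  have hL0 : 0 < L := by linarith
  -- prices
  set p : Fin n → ℝ := fun j => if j ∈ C then -L
    else if j = x then (v (insert x C) - v C) + astar - ε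
    else if j = y then (v (insert y C) - v C) + astar - ε
    else if j = z then (v (insert z C) - v C) + c
    else L with hp
  have hpx : p x = (v (insert x C) - v C) + astar - ε := by simp [hp, hx]
  have hpy : p y = (v (insert y C) - v C) + astar - ε := by simp [hp, hy, Ne.symm hxy]
  have hpz : p z = (v (insert z C) - v C) + c := by simp [hp, hz, Ne.symm hxz, Ne.symm hyz]
  have hpC : ∀ j ∈ C, p j = -L := fun j hj => by simp [hp, hj]
  have hpout : ∀ j, j ∉ C → j ≠ x → j ≠ y → j ≠ z → p j = L := fun j h1 h2 h3 h4 => by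
    simp [hp, h1, h2, h3, h4]
  -- not-mem facts
  have hyCz : y ∉ insert z C := by simp [hyz, hy]
  have hxCy : x ∉ insert y C := by simp [hxy, hx]
  have hxCz : x ∉ insert z C := by simp [hxz, hx]
  have hxCyz : x ∉ insert y (insert z C) := by simp [hxy, hxz, hx]
  -- sums
  have hs_x : ∑ j ∈ insert x C, p j = p x + ∑ j ∈ C, p j := Finset.sum_insert hx
  have hs_y : ∑ j ∈ insert y C, p j = p y + ∑ j ∈ C, p j := Finset.sum_insert hy
  have hs_z : ∑ j ∈ insert z C, p j = p z + ∑ j ∈ C, p j := Finset.sum_insert hz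
  have hs_xy : ∑ j ∈ insert x (insert y C), p j = p x + (p y + ∑ j ∈ C, p j) := by
    rw [Finset.sum_insert hxCy, Finset.sum_insert hy]
  have hs_xz : ∑ j ∈ insert x (insert z C), p j = p x + (p z + ∑ j ∈ C, p j) := by
    rw [Finset.sum_insert hxCz, Finset.sum_insert hz]
  have hs_yz : ∑ j ∈ insert y (insert z C), p j = p y + (p z + ∑ j ∈ C, p j) := by
    rw [Finset.sum_insert hyCz, Finset.sum_insert hz]
  have hs_xyz : ∑ j ∈ insert x (insert y (insert z C)), p j
      = p x + (p y + (p z + ∑ j ∈ C, p j)) := by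
    rw [Finset.sum_insert hxCyz, Finset.sum_insert hyCz, Finset.sum_insert hz]
  -- the pair {x,y} over C is demanded at p
  obtain ⟨R, hR⟩ := exists_demand v p
  have hCR : C ⊆ R := fun j hj => pin_in v hR (by rw [hpC j hj, hL])
  have hRC : R ⊆ insert x (insert y (insert z C)) := by
    intro j hj
    by_contra hj'
    simp only [Finset.mem_insert, not_or] at hj'
    exact (pin_out v hR
      (by rw [hpout j hj'.2.2.2 hj'.1 hj'.2.1 hj'.2.2.1, hL])) hj
  have hUR : v R - ∑ j ∈ R, p j ≤
      v (insert x (insert y C)) - ∑ j ∈ insert x (insert y C), p j := by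
    rcases sandwich_triple hCR hRC hx hy hz with rfl | rfl | rfl | rfl | rfl | rfl | rfl | rfl
    · rw [hs_xy, hpx, hpy]; linarith
    · rw [hs_xy, hs_x, hpx, hpy]; linarith
    · rw [hs_xy, hs_y, hpx, hpy]; linarith
    · rw [hs_xy, hs_z, hpx, hpy, hpz]; linarith
    · exact le_refl _
    · rw [hs_xy, hs_xz, hpx, hpy, hpz]; linarith
    · rw [hs_xy, hs_yz, hpx, hpy, hpz]; linarith
    · rw [hs_xy, hs_xyz, hpx, hpy, hpz]; linarith
  have hdem : ∀ T, v T - ∑ j ∈ T, p j ≤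
      v (insert x (insert y C)) - ∑ j ∈ insert x (insert y C), p j :=
    fun T => le_trans (hR T) hUR
  -- raise x's price
  set p' : Fin n → ℝ := fun j => if j = x then L + |p x| else p j with hp'
  have hp'x : p' x = L + |p x| := by simp [hp']
  have hp'ne : ∀ j, j ≠ x → p' j = p j := fun j hj => by simp [hp', hj]
  have hle : ∀ j, p j ≤ p' j := by
    intro j
    by_cases hjx : j = x
    · subst hjx; rw [hp'x]
      have := le_abs_self (p j); linarith
    · rw [hp'ne j hjx]
  obtain ⟨S', hS', hkeep⟩ := hGS p p' hle _ hdem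
  have hyS' : y ∈ S' := hkeep y (by simp) (by rw [hp'ne y (Ne.symm hxy)])
  have hCS' : C ⊆ S' := fun j hj =>
    pin_in v hS' (by rw [hp'ne j (fun h => hx (h ▸ hj)), hpC j hj, hL])
  have hxS' : x ∉ S' := pin_out v hS' (by rw [hp'x, hL]; have := abs_nonneg (p x); linarith)
  have hS'yz : S' ⊆ insert y (insert z C) := by
    intro j hj
    by_cases hjx : j = x
    · exact absurd (hjx ▸ hj) hxS'
    by_contra hj'
    simp only [Finset.mem_insert, not_or] at hj'
    exact (pin_out v hS'
      (by rw [hp'ne j hjx, hpout j hj'.2.2 hjx hj'.1 hj'.2.1, hL])) hj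
  -- sums for p'
  have hs'_C : ∑ j ∈ C, p' j = ∑ j ∈ C, p j :=
    Finset.sum_congr rfl (fun j hj => hp'ne j (fun h => hx (h ▸ hj)))
  have hs'_y : ∑ j ∈ insert y C, p' j = p y + ∑ j ∈ C, p j := by
    rw [Finset.sum_insert hy, hs'_C, hp'ne y (Ne.symm hxy)]
  have hs'_z : ∑ j ∈ insert z C, p' j = p z + ∑ j ∈ C, p j := by
    rw [Finset.sum_insert hz, hs'_C, hp'ne z (Ne.symm hxz)]
  have hs'_yz : ∑ j ∈ insert y (insert z C), p' j = p y + (p z + ∑ j ∈ C, p j) := by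
    rw [Finset.sum_insert hyCz, Finset.sum_insert hz, hs'_C,
      hp'ne y (Ne.symm hxy), hp'ne z (Ne.symm hxz)]
  rcases sandwich_pair hCS' hS'yz hy hz with rfl | rfl | rfl | rfl
  · exact hy hyS'
  · -- S' = insert y C : compare with insert z C
    have h1 := hS' (insert z C)
    rw [hs'_z, hs'_y, hpy, hpz] at h1
    linarith
  · -- S' = insert z C : y ∈ S' gives contradiction
    simp only [Finset.mem_insert] at hyS'
    rcases hyS' with h | h
    exacts [hyz h, hy h]
  · -- S' = insert y (insert z C) : compare with insert z C
    have h1 := hS' (insert z C)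
    rw [hs'_z, hs'_yz, hpy, hpz] at h1
    linarith
lemma quadr {v : Finset (Fin n) → ℝ} (hGS : GS v) (Z : Finset (Fin n)) {x0 x1 y0 y1 : Fin n}
    (hx0 : x0 ∉ Z) (hx1 : x1 ∉ Z) (hy0 : y0 ∉ Z) (hy1 : y1 ∉ Z)
    (hx01 : x0 ≠ x1) (hy01 : y0 ≠ y1)
    (h00 : x0 ≠ y0) (h01 : x0 ≠ y1) (h10 : x1 ≠ y0) (h11 : x1 ≠ y1) :
    v (insert x0 (insert x1 Z)) + v (insert y0 (insert y1 Z)) ≤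
      max (v (insert x0 (insert y0 Z)) + v (insert x1 (insert y1 Z)))
          (v (insert x0 (insert y1 Z)) + v (insert x1 (insert y0 Z))) := by
  by_contra hcon
  rw [not_le, max_lt_iff] at hcon
  obtain ⟨hc1, hc2⟩ := hcon
  have t30 := triangle hGS Z hx0 hx1 hy0 hx01 h00 h10
  have t31 := triangle hGS Z hx0 hx1 hy1 hx01 h01 h11
  have t4 := triangle hGS Z hy0 hy1 hx1 hy01 (Ne.symm h10) (Ne.symm h11)
  have t4' := triangle hGS Z hy0 hy1 hx0 hy01 (Ne.symm h00) (Ne.symm h01)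
  rw [Finset.insert_comm y0 x1 Z, Finset.insert_comm y1 x1 Z] at t4
  rw [Finset.insert_comm y0 x0 Z, Finset.insert_comm y1 x0 Z] at t4'
  rcases le_max_iff.1 t30 with h30 | h30 <;>
    rcases le_max_iff.1 t31 with h31 | h31 <;>
      rcases le_max_iff.1 t4 with h4 | h4 <;>
        rcases le_max_iff.1 t4' with h4' | h4' <;>
          linarith

section Walks
variable {α : Type*}
/-- Cost of a walk: sum over consecutive arcs of `w p q - w p p`. -/
def acost (w : α → α → ℝ) : List α → ℝ
  | [] => 0
  | [_] => 0
  | x :: y :: l => (w x y - w x x) + acost w (y :: l)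

lemma acost_append (w : α → α → ℝ) : ∀ (A : List α) (x : α) (B : List α),
    acost w (A ++ x :: B) = acost w (A ++ [x]) + acost w (x :: B) := by
  intro A
  induction A with
  | nil => intro x B; simp [acost]
  | cons a A ih =>
    intro x B
    cases A with
    | nil => simp [acost]
    | cons c A' =>
      show acost w (a :: c :: (A' ++ x :: B)) = acost w (a :: c :: (A' ++ [x])) + acost w (x :: B)
      have h1 : acost w (a :: c :: (A' ++ x :: B))
          = (w a c - w a a) + acost w ((c :: A') ++ x :: B) := rfl
      have h2 : acost w (a :: c :: (A' ++ [x]))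
          = (w a c - w a a) + acost w ((c :: A') ++ [x]) := rfl
      rw [h1, h2, ih x B]; ring

lemma acost_eq_zip (w : α → α → ℝ) : ∀ l : List α,
    acost w l = ((l.zip l.tail).map fun p => w p.1 p.2 - w p.1 p.1).sum := by
  intro l
  induction l with
  | nil => simp [acost]
  | cons a l ih =>
    cases l with
    | nil => simp [acost]
    | cons c l' =>
      show (w a c - w a a) + acost w (c :: l') = _
      rw [ih]
      simp [List.zip]

lemma exists_dup_decomp [DecidableEq α] : ∀ {l : List α}, ¬ l.Nodup →
    ∃ (P : List α) (s : α) (Q R : List α), l = P ++ s :: (Q ++ s :: R) := by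
  intro l
  induction l with
  | nil => intro h; exact absurd List.nodup_nil h
  | cons a t ih =>
    intro h
    by_cases hat : a ∈ t
    · obtain ⟨Q, R, hQR⟩ := List.append_of_mem hat
      exact ⟨[], a, Q, R, by rw [hQR]; simp⟩
    · have : ¬ t.Nodup := fun hn => h (List.nodup_cons.2 ⟨hat, hn⟩)
      obtain ⟨P, s, Q, R, hPQR⟩ := ih this
      exact ⟨a :: P, s, Q, R, by rw [hPQR]; simp⟩

lemma rotate_one_cons (x : α) (l : List α) : (x :: l).rotate 1 = l ++ [x] := by
  rw [List.rotate_cons_succ, List.rotate_zero]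

/-- closed-walk cost via a cyclic permutation `σ` mapping along the walk. -/
lemma acost_closed_eq_perm [DecidableEq α] [Fintype α] (w : α → α → ℝ)
    (x : α) (l : List α) (hnd : (x :: l).Nodup) :
    acost w (x :: (l ++ [x])) =
      ∑ t, (w t ((x :: l).formPerm t) - w t t) := by
  classical
  have hrot : (x :: l).rotate 1 = l ++ [x] := rotate_one_cons x l
  have hzip : ((x :: l) ++ [x]).zip (l ++ [x])
      = (x :: l).map (fun t => (t, (x :: l).formPerm t)) := by
    apply List.ext_getElem
    · simp
    · intro i h1 h2
      have hiC : i < (x :: l).length := by simpa using h2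
      have hi2 : i < (l ++ [x]).length := by simpa using hiC
      have hi1 : i < ((x :: l) ++ [x]).length := by simp only [List.length_append]; omega
      rw [List.getElem_zip, List.getElem_map]
      have e1 : ((x :: l) ++ [x])[i]'hi1 = (x :: l)[i] := List.getElem_append_left hiC
      have e2 : (l ++ [x])[i] = (x :: l)[(i + 1) % (x :: l).length]'
          (Nat.mod_lt _ (by simp)) := by
        rw [← List.getElem_rotate (x :: l) 1 i (by rwa [hrot])]
        exact (List.getElem_of_eq hrot (by rwa [hrot])).symm
      rw [e1, e2, Prod.mk.injEq]
      exact ⟨rfl, (List.formPerm_apply_getElem _ hnd i hiC).symm⟩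
  have h1 : acost w (x :: (l ++ [x]))
      = ((((x :: l) ++ [x]).zip (l ++ [x])).map
          (fun p : α × α => w p.1 p.2 - w p.1 p.1)).sum := by
    rw [acost_eq_zip]
    rfl
  rw [h1, hzip, List.map_map]
  have h2 : ((x :: l).map ((fun p : α × α => w p.1 p.2 - w p.1 p.1) ∘
      (fun t => (t, (x :: l).formPerm t)))).sum
      = ∑ t ∈ (x :: l).toFinset, (w t ((x :: l).formPerm t) - w t t) := by
    rw [List.sum_toFinset _ hnd]
    rfl
  rw [h2]
  apply Finset.sum_subset (Finset.subset_univ _)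
  intro t _ ht
  rw [List.formPerm_apply_of_notMem (by simpa using ht)]
  ring

lemma closed_walk_pos [DecidableEq α] [Fintype α] (w : α → α → ℝ)
    (hpos : ∀ σ : Equiv.Perm α, σ ≠ 1 → ∑ t, w t t < ∑ t, w t (σ t)) :
    ∀ (N : ℕ) (l : List α) (x : α), l.length ≤ N →
      (x :: (l ++ [x])).Chain' (· ≠ ·) → 0 < acost w (x :: (l ++ [x])) := by
  intro N
  induction N with
  | zero =>
    intro l x hlen hch
    have hl : l = [] := List.length_eq_zero_iff.1 (Nat.le_zero.1 hlen)
    subst hl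
    exact absurd rfl (List.isChain_cons_cons.1 hch).1
  | succ N ih =>
    intro l x hlen hch
    by_cases hnd : (x :: l).Nodup
    · -- simple cycle: use the global uniqueness hypothesis
      cases l with
      | nil => exact absurd rfl (List.isChain_cons_cons.1 hch).1
      | cons c l' =>
        rw [acost_closed_eq_perm w x (c :: l') hnd]
        have hσx : (x :: c :: l').formPerm x = c := by
          have h0 := List.formPerm_apply_getElem (x :: c :: l') hnd 0 (by simp)
          simpa using h0
        have hxc : x ≠ c := (List.isChain_cons_cons.1 hch).1
        have hσ1 : (x :: c :: l').formPerm ≠ 1 := by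
          intro h
          rw [h] at hσx
          exact hxc (by simpa using hσx)
        have hlt := hpos _ hσ1
        rw [Finset.sum_sub_distrib]
        linarith
    · obtain ⟨P, s, Q, R, hdec⟩ := exists_dup_decomp hnd
      have hTeq : x :: (l ++ [x]) = P ++ s :: (Q ++ s :: (R ++ [x])) := by
        rw [show x :: (l ++ [x]) = (x :: l) ++ [x] from rfl, hdec]
        simp
      have chT : (P ++ s :: (Q ++ s :: (R ++ [x]))).Chain' (· ≠ ·) := hTeq ▸ hch
      obtain ⟨c1, c2, c3⟩ := List.isChain_append.1 chT
      have c2' : ((s :: Q) ++ (s :: (R ++ [x]))).Chain' (· ≠ ·) := c2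
      obtain ⟨c2a, c2b, c2c⟩ := List.isChain_append.1 c2'
      -- piece 1 : closed walk on s :: Q
      have ch1 : (s :: (Q ++ [s])).Chain' (· ≠ ·) := by
        have : ((s :: Q) ++ [s]).Chain' (· ≠ ·) := by
          refine List.isChain_append.2 ⟨c2a, List.isChain_singleton s, ?_⟩
          intro u hu y hy
          simp only [List.head?_cons, Option.mem_def, Option.some.injEq] at hy
          subst hy
          exact c2c u hu s (by simp)
        simpa using this
      -- length bookkeeping
      have hlP : (x :: l).length = P.length + Q.length + R.length + 2 := by
        rw [hdec]; simp; omega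
      have hQlen : Q.length ≤ N := by simp at hlP; omega
      have hpc1 := ih Q s hQlen ch1
      -- acost splittings
      have hA1 : acost w (P ++ s :: (Q ++ s :: (R ++ [x])))
          = acost w (P ++ [s]) + acost w (s :: (Q ++ s :: (R ++ [x]))) :=
        acost_append w P s _
      have hA2 : acost w (s :: (Q ++ s :: (R ++ [x])))
          = acost w ((s :: Q) ++ [s]) + acost w (s :: (R ++ [x])) :=
        acost_append w (s :: Q) s (R ++ [x])
      have goalEq : acost w (x :: (l ++ [x])) = acost w (P ++ s :: (Q ++ s :: (R ++ [x]))) := by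
        rw [hTeq]
      cases P with
      | nil =>
        have hdec' : x :: l = s :: (Q ++ s :: R) := hdec
        injection hdec' with hx hl2
        subst hx
        have hRlen : R.length ≤ N := by
          have := congrArg List.length hl2
          simp at this; omega
        have hpc2 := ih R x hRlen c2b
        rw [goalEq, hA1, hA2]
        have h0 : acost w ([] ++ [x]) = 0 := rfl
        have hbr : acost w ((x :: Q) ++ [x]) = acost w (x :: (Q ++ [x])) := rfl
        linarith [hpc1, hpc2, h0, hbr]
      | cons p P' =>
        have hdec' : x :: l = p :: (P' ++ s :: (Q ++ s :: R)) := hdec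
        injection hdec' with hx hl2
        subst hx
        have hP'len : (P' ++ s :: R).length ≤ N := by
          have := congrArg List.length hl2
          simp at this ⊢; omega
        -- piece 2 : closed walk on x :: (P' ++ s :: R)
        have ch2 : (x :: ((P' ++ s :: R) ++ [x])).Chain' (· ≠ ·) := by
          have heq2 : x :: ((P' ++ s :: R) ++ [x]) = (x :: P') ++ (s :: (R ++ [x])) := by simp
          rw [heq2]
          refine List.isChain_append.2 ⟨c1, c2b, ?_⟩
          intro u hu y hy
          simp only [List.head?_cons, Option.mem_def, Option.some.injEq] at hy
          subst hy
          exact c3 u hu s (by simp)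
        have hpc2 := ih (P' ++ s :: R) x hP'len ch2
        have hA3 : acost w (x :: ((P' ++ s :: R) ++ [x]))
            = acost w ((x :: P') ++ [s]) + acost w (s :: (R ++ [x])) := by
          have heq2 : x :: ((P' ++ s :: R) ++ [x]) = (x :: P') ++ (s :: (R ++ [x])) := by simp
          rw [heq2]
          exact acost_append w (x :: P') s (R ++ [x])
        rw [goalEq, hA1, hA2]
        have hbr : acost w ((s :: Q) ++ [s]) = acost w (s :: (Q ++ [s])) := rfl
        linarith [hpc1, hpc2, hA3, hbr]


end Walks
/-- the multi-swap set -/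
def Phi (S : Finset (Fin n)) (a b : Fin k → Fin n) (I J : Finset (Fin k)) : Finset (Fin n) :=
  (S \ I.image a) ∪ J.image b

/-- swap weights -/
def wgt (v : Finset (Fin n) → ℝ) (S : Finset (Fin n)) (a b : Fin k → Fin n) (i j : Fin k) : ℝ :=
  v S - v (insert (b j) (S.erase (a i)))

section PhiFacts
variable {S : Finset (Fin n)} {a b : Fin k → Fin n}

lemma ab_ne (haS : ∀ i, a i ∈ S) (hbS : ∀ i, b i ∉ S) (i j : Fin k) : a i ≠ b j :=
  fun h => hbS j (h ▸ haS i)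

lemma phi_insB (I J : Finset (Fin k)) (j : Fin k) :
    Phi S a b I (insert j J) = insert (b j) (Phi S a b I J) := by
  unfold Phi; rw [Finset.image_insert, Finset.union_insert]

lemma phi_insA (ha : Function.Injective a) (haS : ∀ i, a i ∈ S)
    (I J : Finset (Fin k)) (i : Fin k) :
    Phi S a b (I.erase i) J = insert (a i) (Phi S a b I J) := by
  unfold Phi
  ext u
  simp only [mem_union, mem_sdiff, mem_insert, mem_image]
  constructor
  · rintro (⟨huS, hua⟩ | hub)
    · by_cases hui : u = a i
      · exact Or.inl hui
      · refine Or.inr (Or.inl ⟨huS, ?_⟩)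
        rintro ⟨i', hi', rfl⟩
        by_cases hii : i' = i
        · exact hui (by rw [hii])
        · exact hua ⟨i', Finset.mem_erase.2 ⟨hii, hi'⟩, rfl⟩
    · exact Or.inr (Or.inr hub)
  · rintro (rfl | ⟨huS, hua⟩ | hub)
    · refine Or.inl ⟨haS i, ?_⟩
      rintro ⟨i', hi', hEq⟩
      have hii : i' = i := ha hEq
      rw [hii] at hi'
      exact (Finset.mem_erase.1 hi').1 rfl
    · refine Or.inl ⟨huS, ?_⟩
      rintro ⟨i', hi', hEq⟩
      exact hua ⟨i', (Finset.mem_erase.1 hi').2, hEq⟩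
    · exact Or.inr hub

lemma phi_insA' (ha : Function.Injective a) (haS : ∀ i, a i ∈ S)
    (I J : Finset (Fin k)) {i : Fin k} (hi : i ∉ I) :
    Phi S a b I J = insert (a i) (Phi S a b (insert i I) J) := by
  have h := phi_insA (b := b) ha haS (insert i I) J i
  rwa [Finset.erase_insert hi] at h

lemma a_notmem_phi (haS : ∀ i, a i ∈ S) (hbS : ∀ i, b i ∉ S)
    {I J : Finset (Fin k)} {i : Fin k} (hi : i ∈ I) :
    a i ∉ Phi S a b I J := by
  intro h
  rcases Finset.mem_union.1 h with h1 | h1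
  · exact (Finset.mem_sdiff.1 h1).2 (Finset.mem_image.2 ⟨i, hi, rfl⟩)
  · obtain ⟨j', _, hEq⟩ := Finset.mem_image.1 h1
    exact hbS j' (hEq ▸ haS i)

lemma b_notmem_phi (hb : Function.Injective b) (hbS : ∀ i, b i ∉ S)
    {I J : Finset (Fin k)} {j : Fin k} (hj : j ∉ J) :
    b j ∉ Phi S a b I J := by
  intro h
  rcases Finset.mem_union.1 h with h1 | h1
  · exact hbS j (Finset.mem_sdiff.1 h1).1
  · obtain ⟨j', hj', hEq⟩ := Finset.mem_image.1 h1
    exact hj ((hb hEq) ▸ hj')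

lemma phi_single (x y : Fin k) :
    Phi S a b {x} {y} = insert (b y) (S.erase (a x)) := by
  unfold Phi
  rw [Finset.image_singleton, Finset.image_singleton, Finset.sdiff_singleton_eq_erase,
    Finset.union_comm, ← Finset.insert_eq]

lemma phi_empty : Phi S a b ∅ ∅ = S := by
  unfold Phi; simp

end PhiFacts

section Path
variable {v : Finset (Fin n) → ℝ} {S : Finset (Fin n)} {a b : Fin k → Fin n}

lemma path_bound (hGS : GS v) (ha : Function.Injective a) (hb : Function.Injective b)
    (haS : ∀ i, a i ∈ S) (hbS : ∀ i, b i ∉ S) :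
    ∀ M : Finset (Fin k),
      (∀ J : Finset (Fin k), J ⊆ M → v (Phi S a b J J) = v S - ∑ i ∈ J, wgt v S a b i i) →
      ∀ x y : Fin k, x ≠ y → x ∉ M → y ∉ M →
      ∃ m : List (Fin k), (x :: (m ++ [y])).Chain' (· ≠ ·) ∧
        v (Phi S a b (insert x M) (insert y M)) ≤
          v S - (∑ i ∈ M, wgt v S a b i i)
            - (acost (wgt v S a b) (x :: (m ++ [y])) + wgt v S a b x x) := by
  intro M
  induction M using Finset.strongInduction with
  | _ M ihM =>
    intro hdiag x y hxy hxM hyM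
    rcases M.eq_empty_or_nonempty with rfl | ⟨t, ht⟩
    · refine ⟨[], by simp [List.Chain', List.isChain_cons_cons, hxy], ?_⟩
      have h1 : Phi S a b (insert x ∅) (insert y ∅) = insert (b y) (S.erase (a x)) := by
        have e0 : (insert x (∅ : Finset (Fin k))) = {x} := by simp
        have e1 : (insert y (∅ : Finset (Fin k))) = {y} := by simp
        rw [e0, e1]
        exact phi_single x y
      rw [h1]
      have h2 : acost (wgt v S a b) (x :: ([] ++ [y]))
          = wgt v S a b x y - wgt v S a b x x := by
        simp [acost]
      rw [h2]
      simp only [Finset.sum_empty]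
      have : wgt v S a b x y = v S - v (insert (b y) (S.erase (a x))) := rfl
      linarith
    · -- inductive step: reroute through t ∈ M
      have hxMt : x ∉ M.erase t := fun h => hxM (Finset.mem_of_mem_erase h)
      have hyMt : y ∉ M.erase t := fun h => hyM (Finset.mem_of_mem_erase h)
      have htMt : t ∉ M.erase t := Finset.notMem_erase t M
      have hxt : x ≠ t := fun h => hxM (h ▸ ht)
      have hyt : y ≠ t := fun h => hyM (h ▸ ht)
      have hdiag' : ∀ J, J ⊆ M.erase t →
          v (Phi S a b J J) = v S - ∑ i ∈ J, wgt v S a b i i :=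
        fun J hJ => hdiag J (hJ.trans (Finset.erase_subset t M))
      obtain ⟨m0, hm0c, hm0b⟩ :=
        ihM (M.erase t) (Finset.erase_ssubset ht) hdiag' x y hxy hxMt hyMt
      obtain ⟨m1, hm1c, hm1b⟩ :=
        ihM (M.erase t) (Finset.erase_ssubset ht) hdiag' x t hxt hxMt htMt
      obtain ⟨m2, hm2c, hm2b⟩ :=
        ihM (M.erase t) (Finset.erase_ssubset ht) hdiag' t y (Ne.symm hyt) htMt hyMt
      -- set identities
      have hMx : Phi S a b M (M.erase t)
          = insert (a x) (Phi S a b (insert x M) (M.erase t)) := phi_insA' ha haS _ _ hxM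
      have eX : Phi S a b (insert x M) (insert y M)
          = insert (b y) (insert (b t) (Phi S a b (insert x M) (M.erase t))) := by
        have h2 : Phi S a b (insert x M) (insert t (M.erase t))
            = insert (b t) (Phi S a b (insert x M) (M.erase t)) := phi_insB _ _ t
        rw [Finset.insert_erase ht] at h2
        rw [phi_insB, h2]
      have eY : Phi S a b (M.erase t) (M.erase t)
          = insert (a t) (insert (a x) (Phi S a b (insert x M) (M.erase t))) := by
        rw [phi_insA ha haS M (M.erase t) t, hMx]
      have h3 : Phi S a b (insert x (M.erase t)) (M.erase t)
          = insert (a t) (Phi S a b (insert x M) (M.erase t)) := by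
        have h4 := phi_insA (b := b) ha haS (insert x M) (M.erase t) t
        rwa [Finset.erase_insert_of_ne hxt] at h4
      have eC1a : Phi S a b (insert x (M.erase t)) (insert y (M.erase t))
          = insert (b y) (insert (a t) (Phi S a b (insert x M) (M.erase t))) := by
        rw [phi_insB, h3]
      have h5 : Phi S a b (insert x M) M
          = insert (b t) (Phi S a b (insert x M) (M.erase t)) := by
        have h6 := phi_insB (S := S) (a := a) (b := b) (insert x M) (M.erase t) t
        rwa [Finset.insert_erase ht] at h6
      have eC1b : Phi S a b M M
          = insert (b t) (insert (a x) (Phi S a b (insert x M) (M.erase t))) := by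
        rw [phi_insA' ha haS M M hxM, h5, Finset.insert_comm]
      have eC2a : Phi S a b (insert t (M.erase t)) (insert y (M.erase t))
          = insert (b y) (insert (a x) (Phi S a b (insert x M) (M.erase t))) := by
        rw [Finset.insert_erase ht, phi_insB, hMx]
      have eC2b : Phi S a b (insert x (M.erase t)) (insert t (M.erase t))
          = insert (b t) (insert (a t) (Phi S a b (insert x M) (M.erase t))) := by
        rw [phi_insB, h3]
      -- the quadrilateral inequality
      have hq := quadr hGS (Phi S a b (insert x M) (M.erase t))
        (x0 := b y) (x1 := b t) (y0 := a t) (y1 := a x)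
        (b_notmem_phi hb hbS hyMt) (b_notmem_phi hb hbS htMt)
        (a_notmem_phi haS hbS (Finset.mem_insert_of_mem ht))
        (a_notmem_phi haS hbS (Finset.mem_insert_self x M))
        (fun h => hyt (hb h)) (fun h => hxt (ha h).symm)
        (Ne.symm (ab_ne haS hbS t y)) (Ne.symm (ab_ne haS hbS x y))
        (Ne.symm (ab_ne haS hbS t t)) (Ne.symm (ab_ne haS hbS x t))
      rw [← eX, ← eY, ← eC1a, ← eC1b, ← eC2a, ← eC2b] at hq
      have vY : v (Phi S a b (M.erase t) (M.erase t))
          = v S - ∑ i ∈ M.erase t, wgt v S a b i i := hdiag _ (Finset.erase_subset t M)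
      have vMM : v (Phi S a b M M) = v S - ∑ i ∈ M, wgt v S a b i i :=
        hdiag M (subset_refl M)
      have hsum : ∑ i ∈ M.erase t, wgt v S a b i i + wgt v S a b t t
          = ∑ i ∈ M, wgt v S a b i i := Finset.sum_erase_add M _ ht
      rcases le_max_iff.1 hq with hq1 | hq2
      · exact ⟨m0, hm0c, by linarith⟩
      · refine ⟨m1 ++ t :: m2, ?_, ?_⟩
        · have heq : x :: ((m1 ++ t :: m2) ++ [y]) = (x :: m1) ++ t :: (m2 ++ [y]) := by simp
          rw [heq]
          refine List.isChain_append.2 ⟨?_, hm2c, ?_⟩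
          · exact List.IsChain.prefix hm1c ⟨[t], by simp⟩
          · intro u hu y' hy'
            simp only [List.head?_cons, Option.mem_def, Option.some.injEq] at hy'
            subst hy'
            have hsplit := List.isChain_append.1
              (show ((x :: m1) ++ [t]).Chain' (· ≠ ·) from hm1c)
            exact hsplit.2.2 u hu t (by simp)
        · have heq : x :: ((m1 ++ t :: m2) ++ [y]) = (x :: m1) ++ t :: (m2 ++ [y]) := by simp
          have hac : acost (wgt v S a b) (x :: ((m1 ++ t :: m2) ++ [y]))
              = acost (wgt v S a b) ((x :: m1) ++ [t])
                + acost (wgt v S a b) (t :: (m2 ++ [y])) := by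
            rw [heq, acost_append]
          have hbr : acost (wgt v S a b) ((x :: m1) ++ [t])
              = acost (wgt v S a b) (x :: (m1 ++ [t])) := rfl
          linarith

lemma main_claim (hGS : GS v) (ha : Function.Injective a) (hb : Function.Injective b)
    (haS : ∀ i, a i ∈ S) (hbS : ∀ i, b i ∉ S)
    (hpos : ∀ σ : Equiv.Perm (Fin k), σ ≠ 1 →
      ∑ t, wgt v S a b t t < ∑ t, wgt v S a b t (σ t)) :
    ∀ I : Finset (Fin k), v (Phi S a b I I) = v S - ∑ i ∈ I, wgt v S a b i i := by
  intro I
  induction I using Finset.strongInduction with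
  | _ I ihI =>
    by_cases hI1 : I.card ≤ 1
    · rcases I.eq_empty_or_nonempty with rfl | hne
      · rw [phi_empty]; simp
      · obtain ⟨i, rfl⟩ := Finset.card_eq_one.1 (le_antisymm hI1 hne.card_pos)
        rw [phi_single i i, Finset.sum_singleton]
        have : wgt v S a b i i = v S - v (insert (b i) (S.erase (a i))) := rfl
        linarith
    · obtain ⟨i, hi, j, hj, hij⟩ := Finset.one_lt_card.1 (lt_of_not_ge hI1)
      obtain ⟨M, hM⟩ : ∃ M, (I.erase i).erase j = M := ⟨_, rfl⟩
      have hjEi : j ∈ I.erase i := Finset.mem_erase.2 ⟨Ne.symm hij, hj⟩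
      have hiEj : i ∈ I.erase j := Finset.mem_erase.2 ⟨hij, hi⟩
      have hiM : i ∉ M := by
        rw [← hM]; exact fun h => (Finset.notMem_erase i I) (Finset.mem_of_mem_erase h)
      have hjM : j ∉ M := by rw [← hM]; exact Finset.notMem_erase j _
      have hEi : insert j M = I.erase i := by rw [← hM]; exact Finset.insert_erase hjEi
      have hEj : insert i M = I.erase j := by
        rw [← hM, Finset.erase_right_comm]; exact Finset.insert_erase hiEj
      have hI : insert i (I.erase i) = I := Finset.insert_erase hi
      have hMI : M ⊆ I := by
        rw [← hM]; exact (Finset.erase_subset _ _).trans (Finset.erase_subset _ _)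
      -- set identities over Z := Phi S a b I M
      have hbj : Phi S a b I (I.erase i) = insert (b j) (Phi S a b I M) := by
        rw [← hEi]; exact phi_insB _ _ j
      have hbi : Phi S a b I (I.erase j) = insert (b i) (Phi S a b I M) := by
        rw [← hEj]; exact phi_insB _ _ i
      have A1 : Phi S a b (I.erase i) (I.erase i)
          = insert (a i) (insert (b j) (Phi S a b I M)) := by
        rw [phi_insA (b := b) ha haS I (I.erase i) i, hbj]
      have A2 : Phi S a b (I.erase j) (I.erase j)
          = insert (a j) (insert (b i) (Phi S a b I M)) := by
        rw [phi_insA (b := b) ha haS I (I.erase j) j, hbi]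
      have A3 : Phi S a b M M = insert (a i) (insert (a j) (Phi S a b I M)) := by
        have t1 : Phi S a b ((I.erase j).erase i) M
            = insert (a i) (Phi S a b (I.erase j) M) := phi_insA (b := b) ha haS _ M i
        have t2 : Phi S a b (I.erase j) M = insert (a j) (Phi S a b I M) :=
          phi_insA (b := b) ha haS I M j
        rw [t2] at t1
        rw [← Finset.erase_right_comm, hM] at t1
        exact t1
      have A4 : Phi S a b I I = insert (b i) (insert (b j) (Phi S a b I M)) := by
        have t1 := phi_insB (S := S) (a := a) (b := b) I (insert j M) i
        have t2 := phi_insB (S := S) (a := a) (b := b) I M j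
        rw [t2] at t1
        rw [hEi, hI] at t1
        exact t1
      have A5 : Phi S a b (I.erase j) (I.erase i)
          = insert (a j) (insert (b j) (Phi S a b I M)) := by
        rw [phi_insA (b := b) ha haS I (I.erase i) j, hbj]
      have A6 : Phi S a b (I.erase i) (I.erase j)
          = insert (a i) (insert (b i) (Phi S a b I M)) := by
        rw [phi_insA (b := b) ha haS I (I.erase j) i, hbi]
      -- diagonal values from the strong induction hypothesis
      have hdiagM : ∀ J, J ⊆ M → v (Phi S a b J J) = v S - ∑ t ∈ J, wgt v S a b t t := by
        intro J hJ
        refine ihI J ?_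
        exact (Finset.ssubset_iff_of_subset (hJ.trans hMI)).2 ⟨i, hi, fun h => hiM (hJ h)⟩
      have vψi : v (Phi S a b (I.erase i) (I.erase i))
          = v S - ∑ t ∈ I.erase i, wgt v S a b t t := ihI _ (Finset.erase_ssubset hi)
      have vψj : v (Phi S a b (I.erase j) (I.erase j))
          = v S - ∑ t ∈ I.erase j, wgt v S a b t t := ihI _ (Finset.erase_ssubset hj)
      have vψM : v (Phi S a b M M) = v S - ∑ t ∈ M, wgt v S a b t t :=
        hdiagM M (subset_refl M)
      -- sum bookkeeping
      have hsum1 : ∑ t ∈ I.erase i, wgt v S a b t t + wgt v S a b i i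
          = ∑ t ∈ I, wgt v S a b t t := Finset.sum_erase_add I _ hi
      have hsum2 : ∑ t ∈ I.erase j, wgt v S a b t t + wgt v S a b j j
          = ∑ t ∈ I, wgt v S a b t t := Finset.sum_erase_add I _ hj
      have hsum3 : ∑ t ∈ M, wgt v S a b t t + wgt v S a b j j
          = ∑ t ∈ I.erase i, wgt v S a b t t := by
        rw [← hM]; exact Finset.sum_erase_add _ _ hjEi
      -- path bounds for the two mispaired sets
      obtain ⟨m1, hm1c, hm1b⟩ :=
        path_bound hGS ha hb haS hbS M hdiagM i j hij hiM hjM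
      obtain ⟨m2, hm2c, hm2b⟩ :=
        path_bound hGS ha hb haS hbS M hdiagM j i (Ne.symm hij) hjM hiM
      rw [hEj, hEi] at hm1b
      rw [hEi, hEj] at hm2b
      -- strict positivity of the closed walk
      have heq : i :: ((m1 ++ j :: m2) ++ [i]) = (i :: m1) ++ j :: (m2 ++ [i]) := by simp
      have hchain : (i :: ((m1 ++ j :: m2) ++ [i])).Chain' (· ≠ ·) := by
        rw [heq]
        refine List.isChain_append.2 ⟨?_, hm2c, ?_⟩
        · exact List.IsChain.prefix hm1c ⟨[j], by simp⟩
        · intro u hu y' hy'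
          simp only [List.head?_cons, Option.mem_def, Option.some.injEq] at hy'
          subst hy'
          have hsplit := List.isChain_append.1
            (show ((i :: m1) ++ [j]).Chain' (· ≠ ·) from hm1c)
          exact hsplit.2.2 u hu j (by simp)
      have hwalk := closed_walk_pos (wgt v S a b) hpos (m1 ++ j :: m2).length
        (m1 ++ j :: m2) i (le_refl _) hchain
      have hac : acost (wgt v S a b) (i :: ((m1 ++ j :: m2) ++ [i]))
          = acost (wgt v S a b) ((i :: m1) ++ [j])
            + acost (wgt v S a b) (j :: (m2 ++ [i])) := by
        rw [heq, acost_append]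
      have hbr : acost (wgt v S a b) ((i :: m1) ++ [j])
          = acost (wgt v S a b) (i :: (m1 ++ [j])) := rfl
      have hstrict : v (Phi S a b (I.erase j) (I.erase i))
          + v (Phi S a b (I.erase i) (I.erase j))
          < 2 * v S - 2 * (∑ t ∈ M, wgt v S a b t t)
            - wgt v S a b i i - wgt v S a b j j := by
        linarith
      -- the two quadrilateral inequalities
      have hq1 := quadr hGS (Phi S a b I M)
        (x0 := a i) (x1 := b j) (y0 := a j) (y1 := b i)
        (a_notmem_phi haS hbS hi) (b_notmem_phi hb hbS hjM)
        (a_notmem_phi haS hbS hj) (b_notmem_phi hb hbS hiM)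
        (ab_ne haS hbS i j) (ab_ne haS hbS j i)
        (ha.ne hij) (ab_ne haS hbS i i)
        (Ne.symm (ab_ne haS hbS j j)) (hb.ne (Ne.symm hij))
      have hq2 := quadr hGS (Phi S a b I M)
        (x0 := b i) (x1 := b j) (y0 := a i) (y1 := a j)
        (b_notmem_phi hb hbS hiM) (b_notmem_phi hb hbS hjM)
        (a_notmem_phi haS hbS hi) (a_notmem_phi haS hbS hj)
        (hb.ne hij) (ha.ne hij)
        (Ne.symm (ab_ne haS hbS i i)) (Ne.symm (ab_ne haS hbS j i))
        (Ne.symm (ab_ne haS hbS i j)) (Ne.symm (ab_ne haS hbS j j))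
      rw [← A1, ← A2, ← A3,
        Finset.insert_comm (b j) (b i), ← A4,
        Finset.insert_comm (b j) (a j), ← A5, ← A6] at hq1
      rw [← A4, ← A3,
        Finset.insert_comm (b i) (a i), ← A6,
        Finset.insert_comm (b j) (a j), ← A5,
        Finset.insert_comm (b i) (a j), ← A2,
        Finset.insert_comm (b j) (a i), ← A1] at hq2
      -- combine
      rcases le_max_iff.1 hq1 with h1 | h1 <;> rcases le_max_iff.1 hq2 with h2 | h2 <;>
        linarith

end Path

theorem unique_minimum_matching_lemma'
    (n k : ℕ) (v : Finset (Fin n) → ℝ)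
    (hGS : GS v)
    (S : Finset (Fin n)) (a b : Fin k → Fin n)
    (ha : Function.Injective a) (hb : Function.Injective b)
    (haS : ∀ i, a i ∈ S) (hbS : ∀ i, b i ∉ S)
    (huniq : ∀ σ : Equiv.Perm (Fin k), σ ≠ 1 →
      ∑ i, (v S - v (insert (b i) (S.erase (a i)))) <
        ∑ i, (v S - v (insert (b (σ i)) (S.erase (a i))))) :
    v S - v ((S \ Finset.image a Finset.univ) ∪ Finset.image b Finset.univ) =
      ∑ i, (v S - v (insert (b i) (S.erase (a i)))) := by
  have hpos : ∀ σ : Equiv.Perm (Fin k), σ ≠ 1 →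
      ∑ t, wgt v S a b t t < ∑ t, wgt v S a b t (σ t) := fun σ hσ => huniq σ hσ
  have h := main_claim hGS ha hb haS hbS hpos Finset.univ
  have h2 : Phi S a b Finset.univ Finset.univ
      = (S \ Finset.image a Finset.univ) ∪ Finset.image b Finset.univ := rfl
  rw [h2] at h
  have h3 : ∑ i ∈ Finset.univ, wgt v S a b i i
      = ∑ i, (v S - v (insert (b i) (S.erase (a i)))) := rfl
  linarith [h, h3]

end UMM

open Finset

/-- **Unique Minimum Matching Lemma.** Let `v` be a gross substitutes valuation,
`S ⊆ [n]`, `A = {a 1, ..., a k} ⊆ S` and `B = {b 1, ..., b k} ⊆ [n] \ S`. Weight the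
bipartite graph on `A × B` by `w(aᵢ, bⱼ) = v(S) - v(S ∪ {bⱼ} \ {aᵢ})`. If the identity
matching `{(aᵢ, bᵢ)}` is the unique minimum-weight perfect matching, then
`v(S) - v(S ∪ B \ A) = ∑ᵢ (v(S) - v(S ∪ {bᵢ} \ {aᵢ}))`. -/
theorem unique_minimum_matching_lemma
    (n k : ℕ) (v : Finset (Fin n) → ℝ)
    (hGS : ∀ (p p' : Fin n → ℝ), (∀ j, p j ≤ p' j) →
      ∀ S : Finset (Fin n),
        (∀ T, v T - ∑ j ∈ T, p j ≤ v S - ∑ j ∈ S, p j) →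
        ∃ S', (∀ T, v T - ∑ j ∈ T, p' j ≤ v S' - ∑ j ∈ S', p' j) ∧
          ∀ j ∈ S, p j = p' j → j ∈ S')
    (S : Finset (Fin n)) (a b : Fin k → Fin n)
    (ha : Function.Injective a) (hb : Function.Injective b)
    (haS : ∀ i, a i ∈ S) (hbS : ∀ i, b i ∉ S)
    (huniq : ∀ σ : Equiv.Perm (Fin k), σ ≠ 1 →
      ∑ i, (v S - v (insert (b i) (S.erase (a i)))) <
        ∑ i, (v S - v (insert (b (σ i)) (S.erase (a i))))) :
    v S - v ((S \ Finset.image a Finset.univ) ∪ Finset.image b Finset.univ) =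
      ∑ i, (v S - v (insert (b i) (S.erase (a i)))) :=
  UMM.unique_minimum_matching_lemma' n k v hGS S a b ha hb haS hbS huniq
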